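/- arXiv:1911.01025 — 4 statements merged into one kernel-verified Lean document; each statement's English description precedes it below -/
import Mathlib

section
/- Let ε, q, q̃, b, b̃ ∈ ℂ, let Q̂ = [[q, q̃], [q̃, q]] be invertible, let B = [[b, b̃], [b̃, b]], and let Q be an arbitrary 2×2 complex matrix. Set M = ε(QB + I₂), M̂ = ε(Q̂B + I₂), λ̂₁ = ε + ε(b + b̃)(q + q̃), and λ̂₂ = ε + ε(b − b̃)(q − q̃). Then every eigenvalue λ of M satisfies min(|λ − λ̂₁|, |λ − λ̂₂|) ≤ ‖(Q − Q̂)·Q̂⁻¹‖ · max(|λ̂₁ − ε|, |λ̂₂ − ε|), where ‖·‖ denotes the ℓ² → ℓ² operator norm of a 2×2 complex matrix. -/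
open Matrix Polynomial


/-- The `ℓ² → ℓ²` operator norm of a `2 × 2` complex matrix, i.e. the norm of the
associated continuous linear map on `EuclideanSpace ℂ (Fin 2)`. -/
noncomputable def l2opNorm (A : Matrix (Fin 2) (Fin 2) ℂ) : ℝ :=
  ‖(Matrix.toEuclideanCLM (𝕜 := ℂ) (n := Fin 2) A :
      EuclideanSpace ℂ (Fin 2) →L[ℂ] EuclideanSpace ℂ (Fin 2))‖

private lemma eval_charpoly2 (M : Matrix (Fin 2) (Fin 2) ℂ) (z : ℂ) :
    M.charpoly.eval z = det (z • (1 : Matrix (Fin 2) (Fin 2) ℂ) - M) := by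
  rw [Matrix.charpoly, ← Polynomial.coe_evalRingHom, RingHom.map_det]
  congr 1
  ext i j
  by_cases h : i = j <;>
    simp [h, Matrix.charmatrix_apply_eq, Matrix.charmatrix_apply_ne, Matrix.one_apply,
      Matrix.smul_apply, Matrix.sub_apply]

private lemma mulVec_norm_le (A : Matrix (Fin 2) (Fin 2) ℂ) (x : Fin 2 → ℂ) :
    ‖(WithLp.equiv 2 (Fin 2 → ℂ)).symm (A.mulVec x)‖
      ≤ l2opNorm A * ‖(WithLp.equiv 2 (Fin 2 → ℂ)).symm x‖ := by
  have := (Matrix.toEuclideanCLM (𝕜 := ℂ) (n := Fin 2) A).le_opNorm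
    ((WithLp.equiv 2 (Fin 2 → ℂ)).symm x)
  exact this

private lemma norm_sq_eq2 (x : Fin 2 → ℂ) :
    ‖(WithLp.equiv 2 (Fin 2 → ℂ)).symm x‖ ^ 2
      = Complex.normSq (x 0) + Complex.normSq (x 1) := by
  rw [EuclideanSpace.norm_eq, Real.sq_sqrt (by positivity)]
  simp [Fin.sum_univ_two, Complex.sq_norm]

private lemma key_id (Pm S x y : ℂ) :
    Complex.normSq (Pm * x + S * y) + Complex.normSq (S * x + Pm * y)
      = (Complex.normSq (Pm + S) * Complex.normSq (x + y)
        + Complex.normSq (Pm - S) * Complex.normSq (x - y)) / 2 := by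
  simp only [Complex.normSq_apply, Complex.add_re, Complex.add_im, Complex.mul_re,
    Complex.mul_im, Complex.sub_re, Complex.sub_im]
  ring

private lemma normSq_eq_norm_sq (z : ℂ) : Complex.normSq z = ‖z‖ ^ 2 := by
  rw [Complex.sq_norm]

/-- Bauer–Fike type bound.  With `Q̂ = [[q, q̃], [q̃, q]]` invertible,
`B = [[b, b̃], [b̃, b]]`, `M = ε (Q B + I₂)`, `M̂ = ε (Q̂ B + I₂)`,
`λ̂₁ = ε + ε (b + b̃)(q + q̃)`, `λ̂₂ = ε + ε (b - b̃)(q - q̃)`, every eigenvalue `λ` of `M`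
(i.e. root of its characteristic polynomial) satisfies
`min |λ - λ̂₁| |λ - λ̂₂| ≤ ‖(Q - Q̂) Q̂⁻¹‖ * max |λ̂₁ - ε| |λ̂₂ - ε|`. -/
theorem stmt_4 (ε q qt b bt : ℂ) (Q : Matrix (Fin 2) (Fin 2) ℂ)
    (hQhat : IsUnit (!![q, qt; qt, q] : Matrix (Fin 2) (Fin 2) ℂ))
    (lam : ℂ)
    (hlam : (Matrix.charpoly (ε • (Q * !![b, bt; bt, b] + 1))).IsRoot lam) :
    min ‖lam - (ε + ε * (b + bt) * (q + qt))‖ ‖lam - (ε + ε * (b - bt) * (q - qt))‖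
      ≤ l2opNorm ((Q - !![q, qt; qt, q]) * (!![q, qt; qt, q])⁻¹)
        * max ‖(ε + ε * (b + bt) * (q + qt)) - ε‖ ‖(ε + ε * (b - bt) * (q - qt)) - ε‖ := by
  set Qh : Matrix (Fin 2) (Fin 2) ℂ := !![q, qt; qt, q] with hQh
  set B : Matrix (Fin 2) (Fin 2) ℂ := !![b, bt; bt, b] with hB
  set M : Matrix (Fin 2) (Fin 2) ℂ := ε • (Q * B + 1) with hM
  set R : Matrix (Fin 2) (Fin 2) ℂ := (Q - Qh) * Qh⁻¹ with hR
  set P : ℂ := ε * (q * b + qt * bt + 1) with hP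
  set S : ℂ := ε * (q * bt + qt * b) with hS
  set l1 : ℂ := ε + ε * (b + bt) * (q + qt) with hl1
  set l2 : ℂ := ε + ε * (b - bt) * (q - qt) with hl2
  have hl1' : P + S = l1 := by rw [hl1, hP, hS]; ring
  have hl2' : P - S = l2 := by rw [hl2, hP, hS]; ring
  set m : ℝ := min ‖lam - l1‖ ‖lam - l2‖ with hm
  set mx : ℝ := max ‖l1 - ε‖ ‖l2 - ε‖ with hmx
  have hm0 : 0 ≤ m := le_min (norm_nonneg _) (norm_nonneg _)
  have hmx0 : 0 ≤ mx := le_trans (norm_nonneg _) (le_max_left _ _)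
  -- eigenvector
  have hdet : det (lam • (1 : Matrix (Fin 2) (Fin 2) ℂ) - M) = 0 := by
    rw [← eval_charpoly2]; exact hlam
  obtain ⟨v, hvne, hveq⟩ := (Matrix.exists_mulVec_eq_zero_iff).2 hdet
  -- Qh inverse
  have hinv : Qh⁻¹ * Qh = 1 :=
    Matrix.nonsing_inv_mul _ ((Matrix.isUnit_iff_isUnit_det _).1 hQhat)
  -- matrix identity
  have key : M - lam • 1 = (ε • (Qh * B + 1) - lam • 1) + R * (ε • (Qh * B + 1) - ε • 1) := by
    have h1 : ε • (Qh * B + 1) - ε • (1 : Matrix (Fin 2) (Fin 2) ℂ) = ε • (Qh * B) := by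
      rw [smul_add]; abel
    rw [h1, hR, Matrix.mul_smul, ← Matrix.mul_assoc, Matrix.mul_assoc (Q - Qh) Qh⁻¹ Qh, hinv,
      Matrix.mul_one, Matrix.sub_mul, hM]
    rw [smul_add, smul_add, smul_sub]
    abel
  set w1 : Fin 2 → ℂ := (ε • (Qh * B + 1) - lam • 1).mulVec v with hw1
  set w0 : Fin 2 → ℂ := (ε • (Qh * B + 1) - ε • 1).mulVec v with hw0
  have hvanish : (M - lam • 1).mulVec v = 0 := by
    rw [Matrix.sub_mulVec]
    have h2 : (lam • (1 : Matrix (Fin 2) (Fin 2) ℂ)).mulVec v = M.mulVec v := by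
      have h3 := hveq
      rw [Matrix.sub_mulVec, sub_eq_zero] at h3
      exact h3
    rw [h2, sub_self]
  have hrel : w1 = -(R.mulVec w0) := by
    have h4 : (M - lam • 1).mulVec v = w1 + R.mulVec w0 := by
      rw [key, Matrix.add_mulVec, ← Matrix.mulVec_mulVec]
    rw [hvanish] at h4
    exact eq_neg_of_add_eq_zero_left h4.symm
  -- explicit entries
  have hE : ∀ μ : ℂ, ε • (Qh * B + 1) - μ • 1 = !![P - μ, S; S, P - μ] := by
    intro μ
    ext i j
    fin_cases i <;> fin_cases j <;>
      simp [hQh, hB, hP, hS, Matrix.mul_apply, Fin.sum_univ_two, Matrix.one_apply] <;>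
      (first | ring1 | exact Or.inl (by ring))
  have hw10 : w1 0 = (P - lam) * v 0 + S * v 1 := by
    rw [hw1, hE lam]; simp [Matrix.mulVec, dotProduct, Fin.sum_univ_two]
  have hw11 : w1 1 = S * v 0 + (P - lam) * v 1 := by
    rw [hw1, hE lam]; simp [Matrix.mulVec, dotProduct, Fin.sum_univ_two]
  have hw00 : w0 0 = (P - ε) * v 0 + S * v 1 := by
    rw [hw0, hE ε]; simp [Matrix.mulVec, dotProduct, Fin.sum_univ_two]
  have hw01 : w0 1 = S * v 0 + (P - ε) * v 1 := by
    rw [hw0, hE ε]; simp [Matrix.mulVec, dotProduct, Fin.sum_univ_two]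
  set N : (Fin 2 → ℂ) → ℝ := fun x => ‖(WithLp.equiv 2 (Fin 2 → ℂ)).symm x‖ with hN
  have hNnn : ∀ x, 0 ≤ N x := fun x => norm_nonneg _
  -- lower bound
  have hA : m * N v ≤ N w1 := by
    have hsq : (m * N v) ^ 2 ≤ N w1 ^ 2 := by
      have e1 : N w1 ^ 2 = (Complex.normSq (P - lam + S) * Complex.normSq (v 0 + v 1)
          + Complex.normSq (P - lam - S) * Complex.normSq (v 0 - v 1)) / 2 := by
        rw [hN, norm_sq_eq2, hw10, hw11, key_id]
      have e2 : N v ^ 2 = Complex.normSq (v 0) + Complex.normSq (v 1) := norm_sq_eq2 v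
      have m1 : m ^ 2 ≤ Complex.normSq (P - lam + S) := by
        have : P - lam + S = -(lam - l1) := by rw [← hl1']; ring
        rw [this, Complex.normSq_neg, normSq_eq_norm_sq]
        exact pow_le_pow_left₀ hm0 (min_le_left _ _) 2
      have m2 : m ^ 2 ≤ Complex.normSq (P - lam - S) := by
        have : P - lam - S = -(lam - l2) := by rw [← hl2']; ring
        rw [this, Complex.normSq_neg, normSq_eq_norm_sq]
        exact pow_le_pow_left₀ hm0 (min_le_right _ _) 2
      have par : Complex.normSq (v 0) + Complex.normSq (v 1)
          = (Complex.normSq (v 0 + v 1) + Complex.normSq (v 0 - v 1)) / 2 := by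
        simp only [Complex.normSq_apply, Complex.add_re, Complex.add_im, Complex.sub_re,
          Complex.sub_im]; ring
      rw [mul_pow, e1, e2, par]
      nlinarith [Complex.normSq_nonneg (v 0 + v 1), Complex.normSq_nonneg (v 0 - v 1),
        sq_nonneg m]
    exact le_of_pow_le_pow_left₀ two_ne_zero (hNnn w1) hsq
  -- upper bound
  have hBd : N w0 ≤ mx * N v := by
    have hsq : N w0 ^ 2 ≤ (mx * N v) ^ 2 := by
      have e1 : N w0 ^ 2 = (Complex.normSq (P - ε + S) * Complex.normSq (v 0 + v 1)
          + Complex.normSq (P - ε - S) * Complex.normSq (v 0 - v 1)) / 2 := by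
        rw [hN, norm_sq_eq2, hw00, hw01, key_id]
      have e2 : N v ^ 2 = Complex.normSq (v 0) + Complex.normSq (v 1) := norm_sq_eq2 v
      have m1 : Complex.normSq (P - ε + S) ≤ mx ^ 2 := by
        have : P - ε + S = l1 - ε := by rw [← hl1']; ring
        rw [this, normSq_eq_norm_sq]
        exact pow_le_pow_left₀ (norm_nonneg _) (le_max_left _ _) 2
      have m2 : Complex.normSq (P - ε - S) ≤ mx ^ 2 := by
        have : P - ε - S = l2 - ε := by rw [← hl2']; ring
        rw [this, normSq_eq_norm_sq]
        exact pow_le_pow_left₀ (norm_nonneg _) (le_max_right _ _) 2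
      have par : Complex.normSq (v 0) + Complex.normSq (v 1)
          = (Complex.normSq (v 0 + v 1) + Complex.normSq (v 0 - v 1)) / 2 := by
        simp only [Complex.normSq_apply, Complex.add_re, Complex.add_im, Complex.sub_re,
          Complex.sub_im]; ring
      rw [mul_pow, e1, e2, par]
      nlinarith [Complex.normSq_nonneg (v 0 + v 1), Complex.normSq_nonneg (v 0 - v 1)]
    exact le_of_pow_le_pow_left₀ two_ne_zero (by positivity) hsq
  have hC : N w1 = N (R.mulVec w0) := by
    rw [hrel]
    exact norm_neg ((WithLp.equiv 2 (Fin 2 → ℂ)).symm (R.mulVec w0))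
  have hNv : 0 < N v := by
    rw [hN]
    refine norm_pos_iff.2 fun h => hvne ?_
    have := congrArg (WithLp.equiv 2 (Fin 2 → ℂ)) h
    simpa using this
  have hK : 0 ≤ l2opNorm R := norm_nonneg _
  have chain : m * N v ≤ l2opNorm R * mx * N v := by
    calc m * N v ≤ N w1 := hA
      _ = N (R.mulVec w0) := hC
      _ ≤ l2opNorm R * N w0 := mulVec_norm_le R w0
      _ ≤ l2opNorm R * (mx * N v) := mul_le_mul_of_nonneg_left hBd hK
      _ = l2opNorm R * mx * N v := by ring
  exact le_of_mul_le_mul_right chain hNv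
end

section
/- Let b > 0 and let κ, k be real numbers with k > 0 and k ≠ |κ + nb| for every integer n; for n ∈ ℤ set κ_n = κ + nb, define ζ_n = √(k² − κ_n²) (the positive real square root) when |κ_n| < k and ζ_n = i√(κ_n² − k²) when |κ_n| > k, and set d = 2π/b. Then the function on the nonzero integers n ↦ 1/(2π|n|) − (i/d)·(1/ζ_n), with values in ℂ, is summable (i.e., the series Σ_{n∈ℤ, n≠0} (1/(2π|n|) − (i/d)(1/ζ_n)) converges absolutely). -/
open Real

set_option maxHeartbeats 1000000

/-- `ζ_n` from the paper: with `κ_n = κ + n b`, `ζ_n = √(k² − κ_n²)` when `|κ_n| < k`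
and `ζ_n = i √(κ_n² − k²)` when `|κ_n| > k`. -/
noncomputable def zeta (b κ k : ℝ) (n : ℤ) : ℂ :=
  if |κ + (n : ℝ) * b| < k then ((Real.sqrt (k ^ 2 - (κ + (n : ℝ) * b) ^ 2) : ℝ) : ℂ)
  else Complex.I * ((Real.sqrt ((κ + (n : ℝ) * b) ^ 2 - k ^ 2) : ℝ) : ℂ)

lemma key_bound (b κ k : ℝ) (hb : 0 < b) (hk : 0 < k) (n : ℤ)
    (h1 : 1 ≤ |((n : ℤ) : ℝ)|) (h2 : 2 * (|κ| + k) ≤ |((n : ℤ) : ℝ)| * b) :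
    ‖((1 / (2 * π * |((n : ℤ) : ℝ)|) : ℝ) : ℂ)
        - (Complex.I / ((2 * π / b : ℝ) : ℂ)) * (1 / zeta b κ k (n : ℤ))‖
      ≤ ((k + 2 * |κ|) / (π * b)) / ((n : ℝ) ^ 2) := by
  set a : ℝ := |((n : ℤ) : ℝ)| with ha
  have ha0 : 0 < a := lt_of_lt_of_le one_pos h1
  set x : ℝ := κ + (n : ℝ) * b with hx
  have habs : |(n : ℝ) * b| = a * b := by
    rw [abs_mul, abs_of_pos hb]
  -- lower bounds on |x|
  have hxl : a * b - |κ| ≤ |x| := by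
    have := abs_sub_abs_le_abs_sub ((n : ℝ) * b) (-κ)
    simp only [abs_neg, sub_neg_eq_add] at this
    rw [habs] at this
    calc a * b - |κ| ≤ |(n : ℝ) * b + κ| := this
    _ = |x| := by rw [hx]; ring_nf
  have hxu : |x| ≤ a * b + |κ| := by
    calc |x| ≤ |κ| + |(n : ℝ) * b| := abs_add_le _ _
    _ = a * b + |κ| := by rw [habs]; ring
  have hx2k : 2 * k ≤ |x| := by
    have : |κ| + 2 * k ≤ a * b - |κ| := by linarith
    linarith
  have hxhalf : a * b / 2 ≤ |x| := by
    have : |κ| ≤ a * b / 2 - k := by nlinarith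
    linarith
  -- zeta is in the second branch
  have hnotlt : ¬ |x| < k := by push_neg; linarith
  set s : ℝ := Real.sqrt (x ^ 2 - k ^ 2) with hs
  have hx2 : k ^ 2 ≤ x ^ 2 := by
    have := abs_nonneg x
    nlinarith [sq_abs x]
  have hs2 : s ^ 2 = x ^ 2 - k ^ 2 := Real.sq_sqrt (by linarith)
  have hs0 : 0 ≤ s := Real.sqrt_nonneg _
  have hsle : s ≤ |x| := by nlinarith [sq_abs x]
  have hsge : |x| / 2 ≤ s := by nlinarith [sq_abs x]
  have hspos : 0 < s := lt_of_lt_of_le (by linarith) hsge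
  -- |x| - s ≤ k/2
  have hdiff : |x| - s ≤ k / 2 := by nlinarith [sq_abs x]
  -- numerator bound
  have hnum : |s - a * b| ≤ k / 2 + |κ| := by
    rw [abs_sub_le_iff]
    constructor <;> nlinarith
  -- rewrite the complex expression as a real
  have hzeta : zeta b κ k n = Complex.I * (s : ℂ) := by
    rw [zeta, if_neg hnotlt]
  have hd0 : (2 * π / b : ℝ) ≠ 0 := by positivity
  have hexpr : ((1 / (2 * π * a) : ℝ) : ℂ)
      - (Complex.I / ((2 * π / b : ℝ) : ℂ)) * (1 / zeta b κ k (n : ℤ))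
      = ((1 / (2 * π * a) - b / (2 * π * s) : ℝ) : ℂ) := by
    rw [hzeta]
    have hsC : (s : ℂ) ≠ 0 := by exact_mod_cast hspos.ne'
    have hpiC : ((π : ℝ) : ℂ) ≠ 0 := by exact_mod_cast Real.pi_ne_zero
    have hbC : ((b : ℝ) : ℂ) ≠ 0 := by exact_mod_cast hb.ne'
    have key : (Complex.I / ((2 * π / b : ℝ) : ℂ)) * (1 / (Complex.I * (s : ℂ)))
        = ((b / (2 * π * s) : ℝ) : ℂ) := by
      calc Complex.I / ((2 * π / b : ℝ) : ℂ) * (1 / (Complex.I * (s : ℂ)))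
          = (Complex.I * (1 / (Complex.I * (s : ℂ)))) / ((2 * π / b : ℝ) : ℂ) := by
            rw [div_mul_eq_mul_div]
        _ = (1 / (s : ℂ)) / ((2 * π / b : ℝ) : ℂ) := by
            rw [mul_one_div, show Complex.I / (Complex.I * (s : ℂ))
              = (Complex.I * 1) / (Complex.I * (s : ℂ)) by rw [mul_one],
              mul_div_mul_left _ _ Complex.I_ne_zero]
        _ = (((1 / s) / (2 * π / b) : ℝ) : ℂ) := by push_cast; ring
        _ = ((b / (2 * π * s) : ℝ) : ℂ) := by
            congr 1
            rw [div_div_div_eq]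
            rw [one_mul, mul_comm s (2 * π)]
    rw [key, ← Complex.ofReal_sub]
  rw [hexpr, Complex.norm_real, Real.norm_eq_abs]
  -- the real estimate
  have heq : 1 / (2 * π * a) - b / (2 * π * s) = (s - a * b) / (2 * π * a * s) := by
    have hpi : (π : ℝ) ≠ 0 := Real.pi_ne_zero
    field_simp
  rw [heq, abs_div, abs_of_pos (by positivity : (0:ℝ) < 2 * π * a * s)]
  have hn2 : (n : ℝ) ^ 2 = a ^ 2 := (sq_abs _).symm
  rw [hn2]
  have hab4 : 2 * π * a * (a * b / 4) ≤ 2 * π * a * s := by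
    have h4 : a * b / 4 ≤ s := by linarith
    exact mul_le_mul_of_nonneg_left h4 (by positivity)
  calc |s - a * b| / (2 * π * a * s)
      ≤ (k / 2 + |κ|) / (2 * π * a * (a * b / 4)) := by
        apply div_le_div₀ (by positivity) hnum (by positivity) hab4
    _ = ((k + 2 * |κ|) / (π * b)) / (a ^ 2) := by
        have hpi : (π : ℝ) ≠ 0 := Real.pi_ne_zero
        field_simp
        ring

/-- with `d = 2π/b`, the family `n ↦ 1/(2π|n|) − (i/d)(1/ζ_n)` over the
nonzero integers is (absolutely) summable. -/
theorem stmt_8 (b κ k : ℝ) (hb : 0 < b) (hk : 0 < k)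
    (hcut : ∀ n : ℤ, k ≠ |κ + (n : ℝ) * b|) :
    Summable (fun n : {m : ℤ // m ≠ 0} =>
      ((1 / (2 * π * |((n : ℤ) : ℝ)|) : ℝ) : ℂ)
        - (Complex.I / ((2 * π / b : ℝ) : ℂ)) * (1 / zeta b κ k (n : ℤ))) := by
  have hg : Summable (fun n : ℤ =>
      ((1 / (2 * π * |((n : ℤ) : ℝ)|) : ℝ) : ℂ)
        - (Complex.I / ((2 * π / b : ℝ) : ℂ)) * (1 / zeta b κ k n)) := by
    set C : ℝ := (k + 2 * |κ|) / (π * b) with hC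
    have hsum : Summable (fun n : ℤ => C / (n : ℝ) ^ 2) := by
      have : (fun n : ℤ => C / (n : ℝ) ^ 2) = fun n : ℤ => C * (1 / (n : ℝ) ^ 2) := by
        funext n; ring
      rw [this]
      exact ((Real.summable_one_div_int_pow.mpr one_lt_two)).mul_left C
    apply Summable.of_norm_bounded_eventually hsum
    rw [Filter.eventually_cofinite]
    set M : ℤ := ⌈2 * (|κ| + k) / b⌉ + 1 with hM
    apply Set.Finite.subset (Set.finite_Icc (-M) M)
    intro n hn
    simp only [Set.mem_setOf_eq] at hn
    by_contra hmem
    apply hn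
    simp only [Set.mem_Icc, not_and_or, not_le] at hmem
    have hRpos : 0 < 2 * (|κ| + k) / b := by positivity
    have hMc : (M : ℝ) = (⌈2 * (|κ| + k) / b⌉ : ℤ) + 1 := by
      rw [hM]; push_cast; ring
    have hMR : 2 * (|κ| + k) / b ≤ (M : ℝ) := by
      have := Int.le_ceil (2 * (|κ| + k) / b)
      rw [hMc]; linarith
    have hM1 : (1 : ℝ) ≤ (M : ℝ) := by
      have h0 : (0:ℝ) < (M:ℝ) := lt_of_lt_of_le hRpos hMR
      exact_mod_cast (by exact_mod_cast h0 : (0:ℤ) < M)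
    have hnM : (M : ℝ) ≤ |((n : ℤ) : ℝ)| := by
      rcases hmem with h | h
      · have : (n : ℝ) < -(M : ℝ) := by exact_mod_cast h
        rw [abs_of_neg (by linarith)]; linarith
      · have : (M : ℝ) < (n : ℝ) := by exact_mod_cast h
        rw [abs_of_pos (by linarith)]; linarith
    have h1 : 1 ≤ |((n : ℤ) : ℝ)| := le_trans hM1 hnM
    have h2 : 2 * (|κ| + k) ≤ |((n : ℤ) : ℝ)| * b := by
      have : 2 * (|κ| + k) / b * b ≤ |((n : ℤ) : ℝ)| * b := by
        apply mul_le_mul_of_nonneg_right (le_trans hMR hnM) hb.le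
      rwa [div_mul_cancel₀ _ hb.ne'] at this
    exact key_bound b κ k hb hk n h1 h2
  exact hg.subtype _
end

section
/- There exists a constant C > 0 such that for every real θ with 0 < |θ| ≤ 1, | Σ_{n∈ℤ, n≠0} sgn(n)·e^{inθ}/n² + 2iθ·ln|θ| | ≤ C|θ|, where the (absolutely convergent) sum is over all nonzero integers n and sgn(n) = n/|n|. -/
open Real



lemma telescope (N : ℕ) (hN : 0 < N) :
    HasSum (fun n : ℕ => (1:ℝ)/(n+N) - 1/(n+N+1)) (1/N) := by
  have hnn : ∀ n : ℕ, 0 ≤ (1:ℝ)/(n+N) - 1/(n+N+1) := by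
    intro n
    have h1 : (0:ℝ) < n + N := by positivity
    have : (1:ℝ)/(n+N+1) ≤ 1/(n+N) := by
      apply one_div_le_one_div_of_le h1; linarith
    linarith
  rw [hasSum_iff_tendsto_nat_of_nonneg hnn]
  have heq : ∀ K : ℕ, ∑ n ∈ Finset.range K, ((1:ℝ)/(n+N) - 1/(n+N+1)) = 1/N - 1/(K+N) := by
    intro K
    have := Finset.sum_range_sub' (fun n : ℕ => (1:ℝ)/(n+N)) K
    simp only [Nat.cast_zero, zero_add] at this
    rw [← this]
    congr 1; ext n; push_cast; ring_nf
  simp only [heq]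
  have : Filter.Tendsto (fun K : ℕ => (1:ℝ)/(K+N)) Filter.atTop (nhds 0) := by
    simp only [one_div]
    exact Filter.Tendsto.comp tendsto_inv_atTop_zero
      (Filter.tendsto_atTop_add_const_right _ _ tendsto_natCast_atTop_atTop)
  simpa using (tendsto_const_nhds.sub this)

lemma sq_summable (N : ℕ) : Summable (fun n : ℕ => (1:ℝ)/(n+N+1)^2) := by
  have h := Real.summable_one_div_nat_pow.mpr (le_refl 2)
  have := (summable_nat_add_iff (f := fun n : ℕ => (1:ℝ)/n^2) (N+1)).mpr h
  apply this.congr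
  intro n; push_cast; ring_nf

lemma tail_bound (N : ℕ) (hN : 0 < N) :
    ∑' n : ℕ, (1:ℝ)/(n+N+1)^2 ≤ 1/(N:ℝ) := by
  rw [← (telescope N hN).tsum_eq]
  refine Summable.tsum_le_tsum ?_ (sq_summable N) (telescope N hN).summable
  intro n
  have h1 : (0:ℝ) < n + N := by positivity
  have h2 : (0:ℝ) < n + N + 1 := by positivity
  rw [div_sub_div _ _ (ne_of_gt h1) (ne_of_gt h2)]
  rw [div_le_div_iff₀ (by positivity) (by positivity)]
  ring_nf
  nlinarith [sq_nonneg ((n:ℝ)+N)]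

lemma Ssummable (θ : ℝ) : Summable (fun n : ℕ => Real.sin ((n+1)*θ)/((n:ℝ)+1)^2) := by
  have hb := sq_summable 0
  simp only [Nat.cast_zero, add_zero] at hb
  apply Summable.of_norm_bounded hb
  intro n
  rw [Real.norm_eq_abs, abs_div, abs_of_nonneg (by positivity : (0:ℝ) ≤ ((n:ℝ)+1)^2)]
  exact div_le_div_of_nonneg_right (Real.abs_sin_le_one _) (by positivity)

set_option maxHeartbeats 1000000 in
lemma key (θ : ℝ) (h0 : 0 < θ) (h1 : θ ≤ 1) :
    |(∑' n : ℕ, Real.sin ((n+1)*θ)/((n:ℝ)+1)^2) + θ * Real.log θ| ≤ 4*θ := by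
  set N : ℕ := ⌊1/θ⌋₊ with hNdef
  have h1θ : (1:ℝ) ≤ 1/θ := by rw [le_div_iff₀ h0]; linarith
  have hN1 : 1 ≤ N := Nat.le_floor (by exact_mod_cast h1θ)
  have hN0 : (0:ℝ) < N := by exact_mod_cast hN1
  have hNle : (N:ℝ) ≤ 1/θ := Nat.floor_le (by positivity)
  have hNlt : 1/θ < N + 1 := Nat.lt_floor_add_one _
  have hNθ : (N:ℝ) * θ ≤ 1 := by rw [← le_div_iff₀ h0]; exact hNle
  have hθN : 1 < ((N:ℝ) + 1) * θ := by rw [← div_lt_iff₀ h0]; exact hNlt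
  set f : ℕ → ℝ := fun n => Real.sin ((n+1)*θ)/((n:ℝ)+1)^2 with hf
  have hsum := Ssummable θ
  have hsplit : ∑' n, f n = ∑ n ∈ Finset.range N, f n + ∑' n, f (n+N) :=
    (Summable.sum_add_tsum_nat_add N hsum).symm
  have hharmval : (harmonic N : ℝ) = ∑ n ∈ Finset.range N, 1/((n:ℝ)+1) := by
    rw [harmonic]; push_cast; simp [one_div]
  -- per-term sine estimate
  have hterm : ∀ n ∈ Finset.range N, |f n - θ/((n:ℝ)+1)| ≤ ((n:ℝ)+1) * θ^3 / 4 := by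
    intro n hn
    rw [Finset.mem_range] at hn
    have hn1 : ((n:ℝ)+1) ≤ N := by exact_mod_cast Nat.succ_le_of_lt hn
    set x : ℝ := ((n:ℝ)+1)*θ with hx
    have hx0 : 0 < x := by positivity
    have hx1 : x ≤ 1 := le_trans (by nlinarith) hNθ
    have hs1 : Real.sin x < x := Real.sin_lt hx0
    have hs2 : x - x^3/4 < Real.sin x := by have := Real.sin_gt_sub_cube hx0; nlinarith [pow_pos hx0 3]
    have hne : ((n:ℝ)+1) ≠ 0 := by positivity
    have : f n - θ/((n:ℝ)+1) = (Real.sin x - x)/((n:ℝ)+1)^2 := by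
      rw [hf]; field_simp; ring
    rw [this, abs_div, abs_of_nonneg (by positivity : (0:ℝ) ≤ ((n:ℝ)+1)^2)]
    rw [div_le_div_iff₀ (by positivity) (by norm_num)]
    have habs : |Real.sin x - x| ≤ x^3/4 := by
      rw [abs_le]; constructor <;> nlinarith
    calc |Real.sin x - x| * 4 ≤ x^3/4 * 4 := by linarith [habs]
      _ = ((n:ℝ)+1)^3 * θ^3 / 4 * 4 := by rw [hx]; ring
      _ ≤ ((n:ℝ)+1)*θ^3/4 * (((n:ℝ)+1)^2 * 4) := by ring_nf; nlinarith [pow_pos (show (0:ℝ) < (n:ℝ)+1 by positivity) 3]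
      _ = _ := by ring
  have hhead : |∑ n ∈ Finset.range N, f n - θ * (harmonic N : ℝ)| ≤ θ/4 := by
    have : ∑ n ∈ Finset.range N, f n - θ * (harmonic N : ℝ)
        = ∑ n ∈ Finset.range N, (f n - θ/((n:ℝ)+1)) := by
      rw [hharmval, Finset.mul_sum, ← Finset.sum_sub_distrib]
      congr 1; ext n; rw [mul_one_div]
    rw [this]
    calc |∑ n ∈ Finset.range N, (f n - θ/((n:ℝ)+1))|
        ≤ ∑ n ∈ Finset.range N, |f n - θ/((n:ℝ)+1)| := Finset.abs_sum_le_sum_abs _ _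
      _ ≤ ∑ n ∈ Finset.range N, ((n:ℝ)+1) * θ^3 / 4 := Finset.sum_le_sum hterm
      _ ≤ ∑ n ∈ Finset.range N, (N:ℝ) * θ^3 / 4 := by
          apply Finset.sum_le_sum
          intro n hn
          rw [Finset.mem_range] at hn
          have : ((n:ℝ)+1) ≤ N := by exact_mod_cast Nat.succ_le_of_lt hn
          have : ((n:ℝ)+1) * θ^3 ≤ (N:ℝ) * θ^3 := by nlinarith [pow_pos h0 3]
          linarith
      _ = (N:ℝ) * ((N:ℝ) * θ^3 / 4) := by rw [Finset.sum_const, Finset.card_range]; ring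
      _ ≤ θ/4 := by nlinarith [sq_nonneg ((N:ℝ)*θ)]
  have hharm : |(harmonic N : ℝ) + Real.log θ| ≤ 1 := by
    have hlogθ : Real.log θ = - Real.log (1/θ) := by
      rw [one_div, Real.log_inv]; ring
    have hm1 : Real.log N ≤ Real.log (1/θ) := Real.log_le_log hN0 hNle
    have hm2 : Real.log (1/θ) ≤ Real.log ((N:ℝ)+1) := Real.log_le_log (by positivity) (le_of_lt hNlt)
    have hb1 : Real.log (((N:ℕ):ℝ)+1) ≤ (harmonic N : ℝ) := by
      have := log_add_one_le_harmonic N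
      push_cast at this ⊢
      linarith
    have hb2 : (harmonic N : ℝ) ≤ 1 + Real.log N := harmonic_le_one_add_log N
    rw [abs_le, hlogθ]
    constructor <;> push_cast at hb1 ⊢ <;> linarith
  have hN2θ : 1/(N:ℝ) ≤ 2*θ := by
    rw [div_le_iff₀ hN0]
    have hN1r : (1:ℝ) ≤ N := by exact_mod_cast hN1
    nlinarith [hθN, h0, hN1r]
  have htail : |∑' n, f (n+N)| ≤ 2*θ := by
    have hle : ∀ n : ℕ, |f (n+N)| ≤ (1:ℝ)/((n:ℝ)+N+1)^2 := by
      intro n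
      rw [hf]
      simp only
      rw [abs_div, abs_of_nonneg (by positivity : (0:ℝ) ≤ (((n+N:ℕ):ℝ)+1)^2)]
      push_cast
      exact div_le_div_of_nonneg_right (Real.abs_sin_le_one _) (by positivity)
    have habs_sum : Summable (fun n : ℕ => |f (n+N)|) :=
      Summable.of_nonneg_of_le (fun _ => abs_nonneg _) hle (sq_summable N)
    calc |∑' n, f (n+N)| ≤ ∑' n, |f (n+N)| := by
          have := norm_tsum_le_tsum_norm (f := fun n : ℕ => f (n+N))
            (by simpa only [Real.norm_eq_abs] using habs_sum)
          simpa only [Real.norm_eq_abs] using this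
      _ ≤ ∑' n : ℕ, (1:ℝ)/((n:ℝ)+N+1)^2 := Summable.tsum_le_tsum hle habs_sum (sq_summable N)
      _ ≤ 1/(N:ℝ) := tail_bound N (by exact_mod_cast hN1)
      _ ≤ 2*θ := hN2θ
  rw [hsplit]
  have : ∑ n ∈ Finset.range N, f n + ∑' n, f (n+N) + θ * Real.log θ
      = (∑ n ∈ Finset.range N, f n - θ * (harmonic N : ℝ))
        + θ * ((harmonic N : ℝ) + Real.log θ) + ∑' n, f (n+N) := by ring
  rw [this]
  calc _ ≤ |(∑ n ∈ Finset.range N, f n - θ * (harmonic N : ℝ))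
        + θ * ((harmonic N : ℝ) + Real.log θ)| + |∑' n, f (n+N)| := abs_add_le _ _
    _ ≤ |∑ n ∈ Finset.range N, f n - θ * (harmonic N : ℝ)|
        + |θ * ((harmonic N : ℝ) + Real.log θ)| + |∑' n, f (n+N)| := by
          linarith [abs_add_le (∑ n ∈ Finset.range N, f n - θ * (harmonic N : ℝ)) (θ * ((harmonic N : ℝ) + Real.log θ))]
    _ ≤ θ/4 + θ * 1 + 2*θ := by
        have : |θ * ((harmonic N : ℝ) + Real.log θ)| = θ * |(harmonic N : ℝ) + Real.log θ| := by
          rw [abs_mul, abs_of_pos h0]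
        rw [this]
        have := mul_le_mul_of_nonneg_left hharm (le_of_lt h0)
        linarith
    _ ≤ 4*θ := by linarith

lemma key' (θ : ℝ) (h0 : 0 < |θ|) (h1 : |θ| ≤ 1) :
    |(∑' n : ℕ, Real.sin ((n+1)*θ)/((n:ℝ)+1)^2) + θ * Real.log (abs θ)| ≤ 4*|θ| := by
  rcases lt_or_gt_of_ne (fun h : θ = 0 => by simp [h] at h0) with hneg | hpos
  · have habs : |θ| = -θ := abs_of_neg hneg
    rw [habs] at h1 ⊢
    have h2 := key (-θ) (by linarith) h1
    have hts : (∑' n : ℕ, Real.sin ((n+1)*θ)/((n:ℝ)+1)^2)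
        = - ∑' n : ℕ, Real.sin ((n+1)*(-θ))/((n:ℝ)+1)^2 := by
      rw [← tsum_neg]
      congr 1; ext n
      rw [mul_neg, Real.sin_neg]; ring
    rw [hts]
    have : -(∑' n : ℕ, Real.sin ((n+1)*(-θ))/((n:ℝ)+1)^2) + θ * Real.log (-θ)
        = -((∑' n : ℕ, Real.sin ((n+1)*(-θ))/((n:ℝ)+1)^2) + (-θ) * Real.log (-θ)) := by ring
    rw [this, abs_neg]
    exact h2
  · have habs : |θ| = θ := abs_of_pos hpos
    rw [habs] at h1 ⊢
    exact key θ hpos h1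

/-- there is `C > 0` such that for all real `θ` with `0 < |θ| ≤ 1`,
`|Σ_{n ≠ 0} sgn(n) e^{i n θ}/n² + 2 i θ ln|θ|| ≤ C |θ|`, the sum being over all
nonzero integers. -/
theorem stmt_9 :
    ∃ C > 0, ∀ θ : ℝ, 0 < |θ| → |θ| ≤ 1 →
      ‖(∑' n : {m : ℤ // m ≠ 0},
            (Int.sign (n : ℤ) : ℂ) * Complex.exp (Complex.I * ((n : ℤ) : ℂ) * (θ : ℂ))
              / ((n : ℤ) : ℂ) ^ 2)
          + 2 * Complex.I * (θ : ℂ) * ((Real.log |θ| : ℝ) : ℂ)‖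
        ≤ C * |θ| := by
  refine ⟨8, by norm_num, fun θ h0 h1 => ?_⟩
  set F : ℤ → ℂ := fun m => (Int.sign m : ℂ) * Complex.exp (Complex.I * (m:ℂ) * (θ:ℂ)) / (m:ℂ)^2
    with hF
  have hF0 : F 0 = 0 := by simp [hF]
  have hnorm : ∀ m : ℤ, ‖F m‖ ≤ 1/((m:ℝ)^2) := by
    intro m
    rw [hF]
    simp only
    rw [norm_div, norm_mul]
    have he : Complex.I * (m:ℂ) * (θ:ℂ) = (((m:ℝ)*θ : ℝ):ℂ) * Complex.I := by push_cast; ring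
    rw [he, Complex.norm_exp_ofReal_mul_I, mul_one]
    have h2 : ‖((m:ℂ))^2‖ = (m:ℝ)^2 := by
      rw [norm_pow, Complex.norm_intCast, ← abs_pow, abs_of_nonneg (by positivity)]
    rw [h2]
    have hsle : ‖((Int.sign m : ℤ):ℂ)‖ ≤ 1 := by
      rcases lt_trichotomy m 0 with h|h|h
      · simp [Int.sign_eq_neg_one_of_neg h]
      · simp [h]
      · simp [Int.sign_eq_one_of_pos h]
    rcases eq_or_ne m 0 with rfl|hm
    · simp
    · have : (0:ℝ) < (m:ℝ)^2 := by
        have : (m:ℝ) ≠ 0 := Int.cast_ne_zero.mpr hm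
        positivity
      exact div_le_div_of_nonneg_right hsle this.le
  have hsq : Summable (fun n : ℕ => (1:ℝ)/(n:ℝ)^2) := by
    have := Real.summable_one_div_nat_pow.mpr (le_refl 2)
    exact this.congr (fun n => by norm_num)
  have hs_nat : Summable (fun n : ℕ => F n) := by
    apply Summable.of_norm_bounded hsq
    intro n
    simpa using hnorm n
  have hb1 : Summable (fun n : ℕ => (1:ℝ)/((n:ℝ)+1)^2) := by
    have hb := sq_summable 0
    simpa only [Nat.cast_zero, add_zero] using hb
  have hs_neg : Summable (fun n : ℕ => F (-((n:ℤ)+1))) := by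
    apply Summable.of_norm_bounded hb1
    intro n
    have h := hnorm (-((n:ℤ)+1))
    have heq : ((-((n:ℤ)+1):ℤ):ℝ)^2 = ((n:ℝ)+1)^2 := by push_cast; ring
    rw [heq] at h
    exact h
  have hsub : (∑' n : {m : ℤ // m ≠ 0}, F (n:ℤ)) = ∑' m : ℤ, F m := by
    apply tsum_subtype_eq_of_support_subset (s := {m : ℤ | m ≠ 0})
    intro m hm
    simp only [Set.mem_setOf_eq]
    rintro rfl
    exact hm hF0
  have hZ : ∑' m : ℤ, F m = (∑' n : ℕ, F n) + ∑' n : ℕ, F (-((n:ℤ)+1)) :=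
    tsum_of_nat_of_neg_add_one hs_nat hs_neg
  have hsa : Summable (fun n : ℕ => F ((n:ℤ)+1)) := by
    have h := (summable_nat_add_iff 1).mpr hs_nat
    exact h.congr (fun n => by norm_cast)
  have hshift : (∑' n : ℕ, F n) = ∑' n : ℕ, F ((n:ℤ)+1) := by
    rw [Summable.tsum_eq_zero_add hs_nat]
    simp only [Nat.cast_zero, hF0, zero_add, Nat.cast_add, Nat.cast_one]
  have hterm : ∀ n : ℕ, F ((n:ℤ)+1) + F (-((n:ℤ)+1))
      = 2 * Complex.I * ((Real.sin (((n:ℝ)+1)*θ) / ((n:ℝ)+1)^2 : ℝ) : ℂ) := by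
    intro n
    rw [hF]
    simp only
    have hsign1 : Int.sign ((n:ℤ)+1) = 1 := Int.sign_eq_one_of_pos (by positivity)
    have hsign2 : Int.sign (-((n:ℤ)+1)) = -1 := by rw [Int.sign_neg, hsign1]
    have hx1 : Complex.I * (((n:ℤ)+1 : ℤ):ℂ) * (θ:ℂ) = ((((n:ℝ)+1)*θ :ℝ):ℂ) * Complex.I := by
      push_cast; ring
    have hx2 : Complex.I * ((-((n:ℤ)+1) : ℤ):ℂ) * (θ:ℂ)
        = ((-((((n:ℝ)+1)*θ)) :ℝ):ℂ) * Complex.I := by push_cast; ring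
    rw [hsign1, hsign2, hx1, hx2, Complex.exp_mul_I, Complex.exp_mul_I]
    have hc : ((-((((n:ℝ)+1)*θ)) :ℝ):ℂ) = -(((((n:ℝ)+1)*θ) :ℝ):ℂ) := by push_cast; ring
    rw [hc, Complex.cos_neg, Complex.sin_neg]
    have hsq2 : ((-((n:ℤ)+1) : ℤ):ℂ)^2 = ((((n:ℤ)+1):ℤ):ℂ)^2 := by push_cast; ring
    rw [hsq2, ← Complex.ofReal_sin]
    have hne : ((((n:ℤ)+1):ℤ):ℂ) ≠ 0 := by
      push_cast
      intro h
      have := congrArg Complex.re h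
      simp at this
      nlinarith [Nat.cast_nonneg (α := ℝ) n, this]
    push_cast
    push_cast at hne
    field_simp
    ring
  have hcombine : (∑' n : ℕ, F ((n:ℤ)+1)) + ∑' n : ℕ, F (-((n:ℤ)+1))
      = ∑' n : ℕ, (F ((n:ℤ)+1) + F (-((n:ℤ)+1))) := (Summable.tsum_add hsa hs_neg).symm
  have hpull : ∑' n : ℕ, (F ((n:ℤ)+1) + F (-((n:ℤ)+1)))
      = 2 * Complex.I * (((∑' n : ℕ, Real.sin (((n:ℝ)+1)*θ) / ((n:ℝ)+1)^2) : ℝ) : ℂ) := by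
    rw [tsum_congr hterm, tsum_mul_left, Complex.ofReal_tsum]
  rw [show (∑' n : {m : ℤ // m ≠ 0},
            (Int.sign (n : ℤ) : ℂ) * Complex.exp (Complex.I * ((n : ℤ) : ℂ) * (θ : ℂ))
              / ((n : ℤ) : ℂ) ^ 2) = ∑' n : {m : ℤ // m ≠ 0}, F (n:ℤ) from rfl]
  rw [hsub, hZ, hshift, hcombine, hpull]
  set S : ℝ := ∑' n : ℕ, Real.sin (((n:ℝ)+1)*θ) / ((n:ℝ)+1)^2 with hS
  have hrw : 2 * Complex.I * ((S:ℝ):ℂ) + 2 * Complex.I * (θ:ℂ) * ((Real.log |θ| : ℝ):ℂ)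
      = 2 * Complex.I * (((S + θ * Real.log |θ| : ℝ)):ℂ) := by push_cast; ring
  rw [hrw]
  rw [norm_mul, norm_mul, Complex.norm_I, Complex.norm_real, mul_one, Real.norm_eq_abs]
  have hk := key' θ h0 h1
  have hSs : S = ∑' n : ℕ, Real.sin ((n+1)*θ) / ((n:ℝ)+1)^2 := rfl
  rw [hSs]
  have : ‖(2:ℂ)‖ = 2 := by norm_num
  rw [this]
  linarith [hk]
end

section
/- Let b > 0 and let κ, k be real numbers with k > 0 and k ≠ |κ + nb| for every integer n; for n ∈ ℤ set κ_n = κ + nb, define ζ_n = √(k² − κ_n²) (the positive real square root) when |κ_n| < k and ζ_n = i√(κ_n² − k²) when |κ_n| > k. Then for every real θ with θ/(2π) ∉ ℤ, the symmetric partial sums S_N = Σ_{1 ≤ |n| ≤ N} e^{inθ}/ζ_n converge in ℂ as N → ∞. -/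
open Real Filter

namespace Stmt10Aux

lemma sqrt_tendsto_atTop : Tendsto Real.sqrt atTop atTop := by
  refine tendsto_atTop_atTop.2 fun C => ⟨(max 0 C) ^ 2, fun y hy => ?_⟩
  calc C ≤ max 0 C := le_max_right _ _
    _ = Real.sqrt ((max 0 C) ^ 2) := (Real.sqrt_sq (le_max_left _ _)).symm
    _ ≤ Real.sqrt y := Real.sqrt_le_sqrt hy

lemma sum_Ioc_reindex (g : ℤ → ℂ) (a N : ℤ) :
    ∑ n ∈ Finset.Ioc a N, g n = ∑ i ∈ Finset.range (N - a).toNat, g (a + 1 + i) := by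
  refine Finset.sum_nbij' (fun n => (n - a - 1).toNat) (fun i => a + 1 + i) ?_ ?_ ?_ ?_ ?_
  · intro n hn; simp only [Finset.mem_Ioc] at hn; simp only [Finset.mem_range]; omega
  · intro i hi; simp only [Finset.mem_range] at hi; simp only [Finset.mem_Ioc]; omega
  · intro n hn; simp only [Finset.mem_Ioc] at hn
    show a + 1 + ((n - a - 1).toNat : ℤ) = n; omega
  · intro i hi; simp only [Finset.mem_range] at hi
    show (a + 1 + (i : ℤ) - a - 1).toNat = i; omega
  · intro n hn; simp only [Finset.mem_Ioc] at hn
    show g n = g (a + 1 + ((n - a - 1).toNat : ℤ)); congr 1; omega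

lemma sum_Ioc_neg (g : ℤ → ℂ) (a N : ℤ) :
    ∑ n ∈ Finset.Ioc (-N - 1) (-a - 1), g n = ∑ n ∈ Finset.Ioc a N, g (-n) := by
  refine Finset.sum_nbij' (fun n => -n) (fun n => -n) ?_ ?_ ?_ ?_ ?_
  · intro n hn; simp only [Finset.mem_Ioc] at hn ⊢; omega
  · intro n hn; simp only [Finset.mem_Ioc] at hn ⊢; omega
  · intro n _; ring
  · intro n _; ring
  · intro n _; rw [neg_neg]

/-- Dirichlet's test specialized for our geometric-type series. -/
lemma conv_side (w u : ℂ) (hw : w ≠ 1) (hw1 : ‖w‖ = 1) (f : ℕ → ℝ)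
    (hf : Antitone f) (hf0 : Tendsto f atTop (nhds 0)) :
    ∃ L : ℂ, Tendsto (fun m : ℕ => ∑ i ∈ Finset.range m, f i • (u * w ^ i))
      atTop (nhds L) := by
  have hne : w - 1 ≠ 0 := sub_ne_zero.2 hw
  have hpos : 0 < ‖w - 1‖ := norm_pos_iff.2 hne
  have hb : ∀ n : ℕ, ‖∑ i ∈ Finset.range n, u * w ^ i‖ ≤ ‖u‖ * (2 / ‖w - 1‖) := by
    intro n
    rw [← Finset.mul_sum, norm_mul, geom_sum_eq hw]
    refine mul_le_mul_of_nonneg_left ?_ (norm_nonneg _)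
    rw [norm_div]
    refine (div_le_div_iff_of_pos_right hpos).2 ?_
    calc ‖w ^ n - 1‖ ≤ ‖w ^ n‖ + ‖(1 : ℂ)‖ := norm_sub_le _ _
        _ = 2 := by rw [norm_pow, hw1]; norm_num
  have hc : CauchySeq fun n : ℕ => ∑ i ∈ Finset.range n, f i • (u * w ^ i) :=
    hf.cauchySeq_series_mul_of_tendsto_zero_of_bounded hf0 hb
  exact cauchySeq_tendsto_of_complete hc

end Stmt10Aux

open Stmt10Aux

/-- for every real `θ` with `θ/(2π)` not an integer, the symmetric
partial sums `S_N = Σ_{1 ≤ |n| ≤ N} e^{i n θ}/ζ_n` converge in `ℂ` as `N → ∞`. -/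
theorem stmt_10 (b κ k : ℝ) (hb : 0 < b) (hk : 0 < k)
    (hcut : ∀ n : ℤ, k ≠ |κ + (n : ℝ) * b|)
    (θ : ℝ) (hθ : ∀ m : ℤ, θ ≠ 2 * π * (m : ℝ)) :
    ∃ L : ℂ, Tendsto
      (fun N : ℕ => ∑ n ∈ (Finset.Icc (-(N : ℤ)) (N : ℤ)).erase 0,
        Complex.exp (Complex.I * ((n : ℤ) : ℂ) * (θ : ℂ)) / zeta b κ k n)
      atTop (nhds L) := by
  classical
  set g : ℤ → ℂ := fun n => Complex.exp (Complex.I * (n : ℂ) * (θ : ℂ)) / zeta b κ k n with hg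
  -- choose the cutoff n0
  obtain ⟨n0, hn0⟩ : ∃ n0 : ℕ, (k + |κ|) / b < (n0 : ℝ) := exists_nat_gt _
  have hn0' : k + |κ| < (n0 : ℝ) * b := (div_lt_iff₀ hb).1 hn0
  -- for |n| > n0, the zeta takes the `I * sqrt` form
  have habs : ∀ n : ℤ, ((n0 : ℤ) < n ∨ n < -(n0 : ℤ)) → k < |κ + (n : ℝ) * b| := by
    intro n hn
    rcases hn with hn | hn
    · have h1 : (n0 : ℝ) + 1 ≤ (n : ℝ) := by exact_mod_cast hn
      have h2 : (n0 : ℝ) * b < (n : ℝ) * b := by nlinarith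
      have h3 : k < κ + (n : ℝ) * b := by
        have := abs_le.1 (le_refl |κ|); nlinarith [neg_abs_le κ]
      calc k < κ + (n : ℝ) * b := h3
        _ ≤ |κ + (n : ℝ) * b| := le_abs_self _
    · have h1 : (n : ℝ) ≤ -(n0 : ℝ) - 1 := by exact_mod_cast (by omega : n ≤ -(n0 : ℤ) - 1)
      have h2 : (n : ℝ) * b ≤ (-(n0 : ℝ) - 1) * b := by nlinarith
      have h3 : κ + (n : ℝ) * b < -k := by nlinarith [le_abs_self κ, neg_abs_le κ]
      calc k < -(κ + (n : ℝ) * b) := by linarith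
        _ ≤ |κ + (n : ℝ) * b| := neg_le_abs _
  have hzeta : ∀ n : ℤ, k < |κ + (n : ℝ) * b| →
      zeta b κ k n = Complex.I * (Real.sqrt ((κ + (n : ℝ) * b) ^ 2 - k ^ 2) : ℂ) := by
    intro n hn
    rw [zeta, if_neg (not_lt.2 hn.le)]
  have hargpos : ∀ n : ℤ, k < |κ + (n : ℝ) * b| → 0 < (κ + (n : ℝ) * b) ^ 2 - k ^ 2 := by
    intro n hn
    have : k ^ 2 < (κ + (n : ℝ) * b) ^ 2 := by
      rw [← sq_abs (κ + (n : ℝ) * b)]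
      exact pow_lt_pow_left₀ hn hk.le two_ne_zero
    linarith
  -- termwise formula
  have hterm : ∀ n : ℤ, k < |κ + (n : ℝ) * b| →
      g n = (Real.sqrt ((κ + (n : ℝ) * b) ^ 2 - k ^ 2))⁻¹ •
        (-Complex.I * Complex.exp (Complex.I * (n : ℂ) * (θ : ℂ))) := by
    intro n hn
    have hs : (0 : ℝ) < Real.sqrt ((κ + (n : ℝ) * b) ^ 2 - k ^ 2) :=
      Real.sqrt_pos.2 (hargpos n hn)
    have hs' : ((Real.sqrt ((κ + (n : ℝ) * b) ^ 2 - k ^ 2) : ℝ) : ℂ) ≠ 0 := by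
      exact_mod_cast hs.ne'
    rw [hg]
    simp only
    rw [hzeta n hn, Complex.real_smul, Complex.ofReal_inv]
    field_simp
    ring_nf
    rw [Complex.I_sq]
    ring
  -- w = exp(iθ) ≠ 1 and its conjugate-type counterpart
  have hwnorm : ∀ t : ℝ, ‖Complex.exp (Complex.I * (t : ℂ))‖ = 1 := by
    intro t
    rw [Complex.norm_exp]
    simp
  have hwne : ∀ t : ℝ, (∀ m : ℤ, t ≠ 2 * π * (m : ℝ)) →
      Complex.exp (Complex.I * (t : ℂ)) ≠ 1 := by
    intro t ht h
    rw [Complex.exp_eq_one_iff] at h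
    obtain ⟨m, hm⟩ := h
    apply ht m
    have : (Complex.I : ℂ) ≠ 0 := Complex.I_ne_zero
    have hm' : Complex.I * (t : ℂ) = Complex.I * ((2 * π * m : ℝ) : ℂ) := by
      rw [hm]; push_cast; ring
    have := mul_left_cancel₀ this hm'
    exact_mod_cast congrArg Complex.re this
  have hθ' : ∀ m : ℤ, -θ ≠ 2 * π * (m : ℝ) := by
    intro m h
    apply hθ (-m)
    push_cast
    linarith
  -- positive-side data
  set fP : ℕ → ℝ := fun i => (Real.sqrt ((κ + ((n0 : ℝ) + 1 + i) * b) ^ 2 - k ^ 2))⁻¹ with hfP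
  set fM : ℕ → ℝ := fun i => (Real.sqrt ((κ + (-(n0 : ℝ) - 1 - i) * b) ^ 2 - k ^ 2))⁻¹ with hfM
  have hcastP : ∀ i : ℕ, (((n0 : ℤ) + 1 + (i : ℤ) : ℤ) : ℝ) = (n0 : ℝ) + 1 + i := by
    intro i; push_cast; ring
  have hcastM : ∀ i : ℕ, ((-((n0 : ℤ) + 1 + (i : ℤ)) : ℤ) : ℝ) = -(n0 : ℝ) - 1 - i := by
    intro i; push_cast; ring
  have hbigP : ∀ i : ℕ, k < |κ + ((n0 : ℝ) + 1 + i) * b| := by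
    intro i
    have := habs ((n0 : ℤ) + 1 + i) (Or.inl (by omega))
    rwa [hcastP i] at this
  have hbigM : ∀ i : ℕ, k < |κ + (-(n0 : ℝ) - 1 - i) * b| := by
    intro i
    have := habs (-((n0 : ℤ) + 1 + i)) (Or.inr (by omega))
    rwa [hcastM i] at this
  -- monotonicity facts
  have hvalP : ∀ i : ℕ, k < κ + ((n0 : ℝ) + 1 + i) * b := by
    intro i
    have h2 : (n0 : ℝ) * b < ((n0 : ℝ) + 1 + i) * b := by
      have : (0:ℝ) ≤ (i : ℝ) := Nat.cast_nonneg i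
      nlinarith
    nlinarith [neg_abs_le κ]
  have hvalM : ∀ i : ℕ, κ + (-(n0 : ℝ) - 1 - i) * b < -k := by
    intro i
    have : (0:ℝ) ≤ (i : ℝ) := Nat.cast_nonneg i
    nlinarith [le_abs_self κ]
  have hAntiP : Antitone fP := by
    intro i j hij
    have hij' : (i : ℝ) ≤ j := Nat.cast_le.2 hij
    have h1 : 0 < (κ + ((n0 : ℝ) + 1 + i) * b) ^ 2 - k ^ 2 := by
      rw [← sq_abs]; nlinarith [hbigP i, abs_nonneg (κ + ((n0 : ℝ) + 1 + i) * b)]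
    have hx : κ + ((n0 : ℝ) + 1 + i) * b ≤ κ + ((n0 : ℝ) + 1 + j) * b := by nlinarith
    have h2 : (κ + ((n0 : ℝ) + 1 + i) * b) ^ 2 - k ^ 2
        ≤ (κ + ((n0 : ℝ) + 1 + j) * b) ^ 2 - k ^ 2 := by
      nlinarith [hvalP i, hvalP j, hk, hx]
    exact inv_anti₀ (Real.sqrt_pos.2 h1) (Real.sqrt_le_sqrt h2)
  have hAntiM : Antitone fM := by
    intro i j hij
    have hij' : (i : ℝ) ≤ j := Nat.cast_le.2 hij
    have h1 : 0 < (κ + (-(n0 : ℝ) - 1 - i) * b) ^ 2 - k ^ 2 := by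
      rw [← sq_abs]; nlinarith [hbigM i, abs_nonneg (κ + (-(n0 : ℝ) - 1 - i) * b)]
    have hx : κ + (-(n0 : ℝ) - 1 - j) * b ≤ κ + (-(n0 : ℝ) - 1 - i) * b := by nlinarith
    have h2 : (κ + (-(n0 : ℝ) - 1 - i) * b) ^ 2 - k ^ 2
        ≤ (κ + (-(n0 : ℝ) - 1 - j) * b) ^ 2 - k ^ 2 := by
      nlinarith [hvalM i, hvalM j, hk, hx]
    exact inv_anti₀ (Real.sqrt_pos.2 h1) (Real.sqrt_le_sqrt h2)
  -- tendsto 0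
  have htendP : Tendsto fP atTop (nhds 0) := by
    apply Filter.Tendsto.inv_tendsto_atTop
    apply sqrt_tendsto_atTop.comp
    apply tendsto_atTop_add_const_right
    have h1 : Tendsto (fun i : ℕ => κ + ((n0 : ℝ) + 1 + i) * b) atTop atTop := by
      apply tendsto_atTop_add_const_left
      apply Tendsto.atTop_mul_const hb
      exact tendsto_atTop_add_const_left _ _ tendsto_natCast_atTop_atTop
    have := h1.eventually_ge_atTop 1
    apply tendsto_atTop_mono' _ _ (tendsto_atTop_add_const_right _ 0 h1)
    filter_upwards [this] with i hi
    nlinarith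
  have htendM : Tendsto fM atTop (nhds 0) := by
    apply Filter.Tendsto.inv_tendsto_atTop
    apply sqrt_tendsto_atTop.comp
    apply tendsto_atTop_add_const_right
    have h1 : Tendsto (fun i : ℕ => -(κ + (-(n0 : ℝ) - 1 - i) * b)) atTop atTop := by
      have : (fun i : ℕ => -(κ + (-(n0 : ℝ) - 1 - i) * b))
          = fun i : ℕ => (-κ) + (((n0 : ℝ) + 1) + i) * b := by funext i; ring
      rw [this]
      apply tendsto_atTop_add_const_left
      apply Tendsto.atTop_mul_const hb
      exact tendsto_atTop_add_const_left _ _ tendsto_natCast_atTop_atTop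
    have := h1.eventually_ge_atTop 1
    apply tendsto_atTop_mono' _ _ (tendsto_atTop_add_const_right _ 0 h1)
    filter_upwards [this] with i hi
    nlinarith
  -- the geometric factors
  set w : ℂ := Complex.exp (Complex.I * (θ : ℂ)) with hwdef
  set w' : ℂ := Complex.exp (Complex.I * ((-θ : ℝ) : ℂ)) with hw'def
  set uP : ℂ := -Complex.I * Complex.exp (Complex.I * (((n0 : ℝ) + 1 : ℝ) : ℂ) * (θ : ℂ)) with huP
  set uM : ℂ := -Complex.I * Complex.exp (-(Complex.I * (((n0 : ℝ) + 1 : ℝ) : ℂ) * (θ : ℂ))) with huM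
  -- termwise identification
  have htermP : ∀ i : ℕ, g ((n0 : ℤ) + 1 + i) = fP i • (uP * w ^ i) := by
    intro i
    have h := hterm ((n0 : ℤ) + 1 + i) (by rw [hcastP i]; exact hbigP i)
    rw [h]
    rw [hcastP i] at *
    congr 1
    have harg : Complex.I * ((((n0 : ℤ) + 1 + (i : ℤ) : ℤ)) : ℂ) * (θ : ℂ)
        = Complex.I * ((((n0 : ℝ) + 1 : ℝ)) : ℂ) * (θ : ℂ) + (i : ℂ) * (Complex.I * (θ : ℂ)) := by
      push_cast; ring
    rw [huP, hwdef, ← Complex.exp_nat_mul, harg, Complex.exp_add]; ring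
  have htermM : ∀ i : ℕ, g (-((n0 : ℤ) + 1 + i)) = fM i • (uM * w' ^ i) := by
    intro i
    have h := hterm (-((n0 : ℤ) + 1 + i)) (by rw [hcastM i]; exact hbigM i)
    rw [h]
    rw [hcastM i] at *
    congr 1
    have harg : Complex.I * (((-((n0 : ℤ) + 1 + (i : ℤ)) : ℤ)) : ℂ) * (θ : ℂ)
        = -(Complex.I * ((((n0 : ℝ) + 1 : ℝ)) : ℂ) * (θ : ℂ)) + (i : ℂ) * (Complex.I * (((-θ : ℝ)) : ℂ)) := by
      push_cast; ring
    rw [huM, hw'def, ← Complex.exp_nat_mul, harg, Complex.exp_add]; ring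
  -- limits of the one-sided series
  obtain ⟨LP, hLP⟩ := conv_side w uP (hwne θ hθ) (hwnorm θ) fP hAntiP htendP
  obtain ⟨LM, hLM⟩ := conv_side w' uM (hwne (-θ) hθ') (hwnorm (-θ)) fM hAntiM htendM
  -- partial sums of the one-sided series as functions of N
  have hP : ∀ N : ℕ, ∑ n ∈ Finset.Ioc (n0 : ℤ) (N : ℤ), g n
      = ∑ i ∈ Finset.range (N - n0), fP i • (uP * w ^ i) := by
    intro N
    rw [sum_Ioc_reindex]
    have : ((N : ℤ) - (n0 : ℤ)).toNat = N - n0 := by omega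
    rw [this]
    exact Finset.sum_congr rfl fun i _ => htermP i
  have hM : ∀ N : ℕ, ∑ n ∈ Finset.Ioc (-(N : ℤ) - 1) (-(n0 : ℤ) - 1), g n
      = ∑ i ∈ Finset.range (N - n0), fM i • (uM * w' ^ i) := by
    intro N
    rw [sum_Ioc_neg g (n0 : ℤ) (N : ℤ), sum_Ioc_reindex]
    have : ((N : ℤ) - (n0 : ℤ)).toNat = N - n0 := by omega
    rw [this]
    exact Finset.sum_congr rfl fun i _ => htermM i
  -- the central chunk
  set C : ℂ := ∑ n ∈ (Finset.Icc (-(n0 : ℤ)) (n0 : ℤ)).erase 0, g n with hC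
  -- decomposition of the symmetric partial sum for N ≥ n0
  have hdecomp : ∀ N : ℕ, n0 ≤ N →
      ∑ n ∈ (Finset.Icc (-(N : ℤ)) (N : ℤ)).erase 0, g n
        = C + (∑ n ∈ Finset.Ioc (n0 : ℤ) (N : ℤ), g n)
            + (∑ n ∈ Finset.Ioc (-(N : ℤ) - 1) (-(n0 : ℤ) - 1), g n) := by
    intro N hN
    have hN' : (n0 : ℤ) ≤ (N : ℤ) := by exact_mod_cast hN
    have hIcc : ∀ a c : ℤ, Finset.Icc a c = Finset.Ioc (a - 1) c := by
      intro a c; ext x; simp only [Finset.mem_Icc, Finset.mem_Ioc]; omega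
    have h0N : (0 : ℤ) ∈ Finset.Icc (-(N : ℤ)) (N : ℤ) := by
      simp only [Finset.mem_Icc]; omega
    have h0n0 : (0 : ℤ) ∈ Finset.Icc (-(n0 : ℤ)) (n0 : ℤ) := by
      simp only [Finset.mem_Icc]; omega
    rw [Finset.sum_erase_eq_sub h0N, hC, Finset.sum_erase_eq_sub h0n0]
    have hsplit : ∑ n ∈ Finset.Icc (-(N : ℤ)) (N : ℤ), g n
        = (∑ n ∈ Finset.Ioc (-(N : ℤ) - 1) (-(n0 : ℤ) - 1), g n)
          + (∑ n ∈ Finset.Icc (-(n0 : ℤ)) (n0 : ℤ), g n)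
          + (∑ n ∈ Finset.Ioc (n0 : ℤ) (N : ℤ), g n) := by
      rw [hIcc (-(N : ℤ)) (N : ℤ), hIcc (-(n0 : ℤ)) (n0 : ℤ)]
      rw [← Finset.sum_union, ← Finset.sum_union]
      · congr 1
        rw [Finset.Ioc_union_Ioc_eq_Ioc (by omega) (by omega),
          Finset.Ioc_union_Ioc_eq_Ioc (by omega) (by omega)]
      · rw [Finset.Ioc_union_Ioc_eq_Ioc (by omega) (by omega)]
        rw [Finset.disjoint_left]
        intro x hx hx'
        simp only [Finset.mem_Ioc] at hx hx'
        omega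
      · rw [Finset.disjoint_left]
        intro x hx hx'
        simp only [Finset.mem_Ioc] at hx hx'
        omega
    rw [hsplit]
    ring
  refine ⟨C + LP + LM, ?_⟩
  have hsub : Tendsto (fun N : ℕ => N - n0) atTop atTop := tendsto_sub_atTop_nat n0
  have hPt : Tendsto (fun N : ℕ => ∑ n ∈ Finset.Ioc (n0 : ℤ) (N : ℤ), g n) atTop (nhds LP) := by
    have := hLP.comp hsub
    refine this.congr fun N => ?_
    simp only [Function.comp]
    exact (hP N).symm
  have hMt : Tendsto (fun N : ℕ => ∑ n ∈ Finset.Ioc (-(N : ℤ) - 1) (-(n0 : ℤ) - 1), g n)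
      atTop (nhds LM) := by
    have := hLM.comp hsub
    refine this.congr fun N => ?_
    simp only [Function.comp]
    exact (hM N).symm
  have hfinal : Tendsto (fun N : ℕ => C + (∑ n ∈ Finset.Ioc (n0 : ℤ) (N : ℤ), g n)
      + (∑ n ∈ Finset.Ioc (-(N : ℤ) - 1) (-(n0 : ℤ) - 1), g n)) atTop (nhds (C + LP + LM)) :=
    ((tendsto_const_nhds.add hPt).add hMt)
  refine hfinal.congr' ?_
  filter_upwards [eventually_ge_atTop n0] with N hN
  exact (hdecomp N hN).symm
end
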